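/- Let A, B be nondecreasing sequences of length k over the extended reals, and consider the multiset M = {A(j) + B(r) : 1 ≤ j, r ≤ k}. Then for every i ≤ k, the i-th smallest element of M is realized by a pair (j, r) with j + r ≤ i + 1; in particular, the k smallest elements of M are among the pairs (j, r) with j + r ≤ k + 1, a set of size O(k²) whose k-best prefix can be extracted. -/

import Mathlib

set_option linter.unnecessarySimpa false

/-- Let `A, B` be nondecreasing length-`k` sequences of extended reals and
`M` the multiset of pairwise sums `{A j + B r}`. Then for every `i < k`, the `i`-th
smallest element of `M` (0-indexed; i.e. the `(i+1)`-st smallest, 1-indexed) is realized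
by a pair `(j, r)` with `j + r ≤ i` (0-indexed; 1-indexed: `j + r ≤ i + 1`). -/
theorem k_best_pairwise_sums_staircase (k : ℕ) (A B : Fin k → EReal)
    (hA : Monotone A) (hB : Monotone B) :
    ∀ i : Fin k, ∃ j r : Fin k, (j : ℕ) + (r : ℕ) ≤ (i : ℕ) ∧
      (Multiset.sort
          ((Finset.univ.val : Multiset (Fin k × Fin k)).map
            (fun p => A p.1 + B p.2)) (· ≤ ·)).getD (i : ℕ) 0 = A j + B r := by
  intro i
  set f : Fin k × Fin k → EReal := fun p => A p.1 + B p.2 with hf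
  set M : Multiset EReal := (Finset.univ.val : Multiset (Fin k × Fin k)).map f with hM
  set L : List EReal := Multiset.sort M (· ≤ ·) with hL
  have hsort : L.Pairwise (· ≤ ·) := Multiset.pairwise_sort _ _
  have hlen : L.length = k * k := by
    rw [hL, Multiset.length_sort, hM, Multiset.card_map]
    simpa using (Fintype.card_prod (Fin k) (Fin k)).symm ▸ (Finset.card_univ (α := Fin k × Fin k))
  have hk : 0 < k := i.pos
  have hi : (i : ℕ) < L.length := by
    rw [hlen]
    calc (i : ℕ) < k := i.isLt
    _ ≤ k * k := Nat.le_mul_of_pos_left k hk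
  set v : EReal := L.getD (i : ℕ) 0 with hv
  have hvget : v = L[(i : ℕ)] := List.getD_eq_getElem L 0 hi
  -- v ∈ M
  have hvM : v ∈ M := by
    rw [← Multiset.mem_sort (· ≤ ·), ← hL, hvget]
    exact List.getElem_mem hi
  obtain ⟨p0, _, hp0⟩ := Multiset.mem_map.mp hvM
  -- choose minimal pair
  set S : Finset (Fin k × Fin k) := Finset.univ.filter (fun p => f p = v) with hS
  have hSne : S.Nonempty := ⟨p0, by simp [hS, hp0]⟩
  obtain ⟨q, hqS, hqmin⟩ := S.exists_min_image (fun p => (p.1 : ℕ) + (p.2 : ℕ)) hSne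
  have hqv : f q = v := (Finset.mem_filter.mp hqS).2
  by_cases hle : (q.1 : ℕ) + (q.2 : ℕ) ≤ (i : ℕ)
  · exact ⟨q.1, q.2, hle, hqv.symm⟩
  · exfalso
    push_neg at hle
    -- elements of the rectangle minus the corner are < v
    set T : Finset (Fin k × Fin k) := ((Finset.Iic q.1 ×ˢ Finset.Iic q.2).erase q) with hT
    have hTlt : ∀ p ∈ T, f p < v := by
      intro p hp
      rw [hT, Finset.mem_erase, Finset.mem_product, Finset.mem_Iic, Finset.mem_Iic] at hp
      obtain ⟨hne, h1, h2⟩ := hp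
      have hle' : f p ≤ v := by
        rw [← hqv]; exact add_le_add (hA h1) (hB h2)
      refine lt_of_le_of_ne hle' ?_
      intro hpv
      have hpS : p ∈ S := by simp [hS, hpv]
      have := hqmin p hpS
      have hlt : (p.1 : ℕ) + (p.2 : ℕ) < (q.1 : ℕ) + (q.2 : ℕ) := by
        rcases lt_or_eq_of_le h1 with h | h
        · exact Nat.add_lt_add_of_lt_of_le (by exact_mod_cast h) (by exact_mod_cast h2)
        · rcases lt_or_eq_of_le h2 with h' | h'
          · exact Nat.add_lt_add_of_le_of_lt (by exact_mod_cast h.le) (by exact_mod_cast h')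
          · exact absurd (Prod.ext h h') hne
      omega
    -- card of T
    have hTcard : (i : ℕ) + 1 ≤ T.card := by
      have hqmem : q ∈ Finset.Iic q.1 ×ˢ Finset.Iic q.2 := by
        simp [Finset.mem_product]
      rw [hT, Finset.card_erase_of_mem hqmem, Finset.card_product, Fin.card_Iic, Fin.card_Iic]
      have : ((q.1 : ℕ) + 1) * ((q.2 : ℕ) + 1) =
          (q.1 : ℕ) * (q.2 : ℕ) + (q.1 : ℕ) + (q.2 : ℕ) + 1 := by ring
      omega
    -- count of elements < v in M is at least card T
    have hcount1 : T.card ≤ M.countP (fun x => x < v) := by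
      rw [hM, Multiset.countP_map]
      have hsub : T.val ≤ (Finset.univ.val.filter (fun p => f p < v)) := by
        rw [Multiset.le_iff_subset T.nodup]
        intro p hp
        rw [Multiset.mem_filter]
        exact ⟨Finset.mem_univ p, hTlt p hp⟩
      simpa using Multiset.card_le_card hsub
    -- but count of elements < v in L is at most i
    have hcount2 : M.countP (fun x => x < v) ≤ (i : ℕ) := by
      have hMcount : M.countP (fun x => x < v) = L.countP (fun x => decide (x < v)) := by
        conv_lhs => rw [← Multiset.sort_eq M (· ≤ ·)]
        rw [← hL, Multiset.coe_countP]
      rw [hMcount]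
      have hsplit : L.countP (fun x => decide (x < v)) =
          (L.take (i : ℕ)).countP (fun x => decide (x < v)) +
          (L.drop (i : ℕ)).countP (fun x => decide (x < v)) := by
        conv_lhs => rw [← List.take_append_drop (i : ℕ) L]
        rw [List.countP_append]
      rw [hsplit]
      have h1 : (L.take (i : ℕ)).countP (fun x => decide (x < v)) ≤ (i : ℕ) := by
        calc (L.take (i : ℕ)).countP (fun x => decide (x < v)) ≤ (L.take (i : ℕ)).length :=
          List.countP_le_length
        _ ≤ (i : ℕ) := by simp
      have h2 : (L.drop (i : ℕ)).countP (fun x => decide (x < v)) = 0 := by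
        rw [List.countP_eq_zero]
        intro a ha
        simp only [decide_eq_true_eq]
        obtain ⟨m, hm, ham⟩ := List.mem_iff_getElem.mp ha
        rw [List.getElem_drop] at ham
        have : v ≤ a := by
          rw [hvget, ← ham]
          exact hsort.rel_get_of_le (a := ⟨(i:ℕ), hi⟩)
            (b := ⟨(i:ℕ) + m, by rw [List.length_drop] at hm; omega⟩) (by simp)
        exact not_lt.mpr this
      omega
    omega
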